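/- Let n ≥ 1 and let A be an n × n integer matrix with determinant D > 0. Then there exists a matrix U ∈ GL_n(ℤ) (an integer matrix with determinant ±1) such that every entry of the product AU has absolute value at most D. -/

import Mathlib

open Matrix Finset Equiv

/-- Euclid's algorithm on columns `0` and `j` of a matrix, via right multiplication
by unimodular matrices: clears the `(0, j)` entry, leaving all columns other than
`0` and `j` untouched. -/
lemma euclid_step : ∀ (N : ℕ) {m : ℕ} (M : Matrix (Fin (m+1)) (Fin (m+1)) ℤ)
    (j : Fin (m+1)), j ≠ 0 → (M 0 j).natAbs ≤ N →
    ∃ U : Matrix (Fin (m+1)) (Fin (m+1)) ℤ, IsUnit U.det ∧ (M * U) 0 j = 0 ∧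
      ∀ (a k : Fin (m+1)), k ≠ 0 → k ≠ j → (M * U) a k = M a k := by
  intro N
  induction N with
  | zero =>
    intro m M j hj h0
    have : M 0 j = 0 := Int.natAbs_eq_zero.mp (Nat.le_zero.mp h0)
    exact ⟨1, by simp, by simpa using this, by simp⟩
  | succ N ih =>
    intro m M j hj h0
    by_cases hz : M 0 j = 0
    · exact ⟨1, by simp, by simpa using hz, by simp⟩
    · set b := M 0 j with hb
      set a := M 0 0 with ha
      set T : Matrix (Fin (m+1)) (Fin (m+1)) ℤ := transvection j 0 (-(a/b)) with hT
      set σ : Equiv.Perm (Fin (m+1)) := Equiv.swap 0 j with hσ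
      set P : Matrix (Fin (m+1)) (Fin (m+1)) ℤ := σ.permMatrix ℤ with hP
      have hTmul : ∀ (x k : Fin (m+1)), k ≠ 0 → (M * T) x k = M x k := by
        intro x k hk
        exact Matrix.mul_transvection_apply_of_ne _ _ _ _ hk _ _
      have hT0 : (M * T) 0 0 = a % b := by
        rw [hT, Matrix.mul_transvection_apply_same]
        rw [Int.emod_def]; ring
      have hPmul : ∀ (x k : Fin (m+1)), ((M * T) * P) x k = (M * T) x (σ.symm k) := by
        intro x k
        rw [hP, PEquiv.mul_toMatrix_toPEquiv]
        rfl
      have hM₂j : ((M * T) * P) 0 j = a % b := by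
        rw [hPmul]
        simp only [hσ, Equiv.symm_swap, Equiv.swap_apply_right]
        exact hT0
      have hM₂other : ∀ (x k : Fin (m+1)), k ≠ 0 → k ≠ j → ((M * T) * P) x k = M x k := by
        intro x k hk0 hkj
        rw [hPmul]
        simp only [hσ, Equiv.symm_swap, Equiv.swap_apply_of_ne_of_ne hk0 hkj]
        exact hTmul x k hk0
      have hlt : (((M * T) * P) 0 j).natAbs ≤ N := by
        rw [hM₂j]
        have h1 : 0 ≤ a % b := Int.emod_nonneg a hz
        have h2 : a % b < |b| := by rw [Int.abs_eq_natAbs]; exact Int.emod_lt a hz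
        have h3 : (a % b).natAbs < b.natAbs := by
          rw [Int.abs_eq_natAbs] at h2
          omega
        omega
      obtain ⟨U', hU', hU'j, hU'other⟩ := ih ((M * T) * P) j hj hlt
      refine ⟨T * P * U', ?_, ?_, ?_⟩
      · rw [Matrix.det_mul, Matrix.det_mul, hT, Matrix.det_transvection_of_ne _ _ hj _,
          hP, Matrix.det_permutation, one_mul]
        exact ((Equiv.Perm.sign σ).isUnit).mul hU' 
      · rw [← Matrix.mul_assoc, ← Matrix.mul_assoc]
        exact hU'j
      · intro x k hk0 hkj
        rw [← Matrix.mul_assoc, ← Matrix.mul_assoc]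
        rw [hU'other x k hk0 hkj]
        exact hM₂other x k hk0 hkj

/-- Clears the first row of a matrix, except for the `(0,0)` entry which becomes positive. -/
lemma row_clear {m : ℕ} (M : Matrix (Fin (m+1)) (Fin (m+1)) ℤ) (hM : ∃ j, M 0 j ≠ 0) :
    ∃ U : Matrix (Fin (m+1)) (Fin (m+1)) ℤ, IsUnit U.det ∧ 0 < (M * U) 0 0 ∧
      ∀ j : Fin (m+1), j ≠ 0 → (M * U) 0 j = 0 := by
  have key : ∀ r : ℕ, ∃ U : Matrix (Fin (m+1)) (Fin (m+1)) ℤ, IsUnit U.det ∧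
      ∀ j : Fin (m+1), j ≠ 0 → (j : ℕ) < r → (M * U) 0 j = 0 := by
    intro r
    induction r with
    | zero => exact ⟨1, by simp, fun j _ h => absurd h (by omega)⟩
    | succ r ih =>
      obtain ⟨U, hU, hzero⟩ := ih
      by_cases hr : r < m + 1 ∧ r ≠ 0
      · set jr : Fin (m+1) := ⟨r, hr.1⟩ with hjr
        have hjr0 : jr ≠ 0 := by
          simp only [hjr, Ne, Fin.ext_iff, Fin.val_zero]
          exact hr.2
        obtain ⟨U', hU', hU'j, hU'other⟩ :=
          euclid_step ((M * U) 0 jr).natAbs (M * U) jr hjr0 le_rfl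
        refine ⟨U * U', by rw [Matrix.det_mul]; exact hU.mul hU', ?_⟩
        intro j hj0 hjlt
        rw [← Matrix.mul_assoc]
        by_cases hjr' : j = jr
        · rw [hjr']; exact hU'j
        · have hjne : (j : ℕ) ≠ r := fun h => hjr' (Fin.ext h)
          rw [hU'other 0 j hj0 hjr']
          exact hzero j hj0 (by omega)
      · refine ⟨U, hU, fun j hj0 hjr => hzero j hj0 ?_⟩
        rcases Nat.lt_or_ge r (m+1) with h | h
        · have hr0 : r = 0 := by tauto
          subst hr0
          have : j = 0 := by rw [Fin.ext_iff, Fin.val_zero]; omega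
          exact absurd this hj0
        · omega
  obtain ⟨U, hU, hzero⟩ := key (m+1)
  have hz : ∀ j : Fin (m+1), j ≠ 0 → (M * U) 0 j = 0 := fun j hj => hzero j hj j.isLt
  have hne : (M * U) 0 0 ≠ 0 := by
    intro h00
    obtain ⟨j, hj⟩ := hM
    apply hj
    have hinv : U * U⁻¹ = 1 := Matrix.mul_nonsing_inv U hU
    have : M = (M * U) * U⁻¹ := by rw [Matrix.mul_assoc, hinv, Matrix.mul_one]
    rw [this, Matrix.mul_apply]
    apply Finset.sum_eq_zero
    intro k _
    by_cases hk : k = 0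
    · rw [hk, h00, zero_mul]
    · rw [hz k hk, zero_mul]
  rcases lt_or_gt_of_ne hne with hneg | hpos
  · set D : Matrix (Fin (m+1)) (Fin (m+1)) ℤ :=
      Matrix.diagonal (fun k => if k = 0 then (-1 : ℤ) else 1) with hD
    have hDdet : D.det = -1 := by
      rw [hD, Matrix.det_diagonal, Fin.prod_univ_succ]
      simp [Fin.succ_ne_zero]
    refine ⟨U * D, ?_, ?_, ?_⟩
    · rw [Matrix.det_mul, hDdet]
      exact hU.mul (by simp)
    · rw [← Matrix.mul_assoc, hD, Matrix.mul_diagonal]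
      simpa using hneg
    · intro j hj
      rw [← Matrix.mul_assoc, hD, Matrix.mul_diagonal, hz j hj, zero_mul]
  · exact ⟨U, hU, hpos, hz⟩

/-- If the first row of `M` is `(c, 0, …, 0)` then `det M = c * det (minor)`. -/
lemma det_firstrow {m : ℕ} (M : Matrix (Fin (m+1)) (Fin (m+1)) ℤ)
    (h : ∀ j : Fin (m+1), j ≠ 0 → M 0 j = 0) :
    M.det = M 0 0 * (M.submatrix Fin.succ Fin.succ).det := by
  rw [Matrix.det_succ_row_zero, Fin.sum_univ_succ]
  have hz : ∀ j : Fin m, (-1 : ℤ) ^ ((j.succ : ℕ)) * M 0 j.succ *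
      (M.submatrix Fin.succ j.succ.succAbove).det = 0 := by
    intro j
    rw [h j.succ (Fin.succ_ne_zero j), mul_zero, zero_mul]
  rw [Finset.sum_eq_zero fun j _ => hz j, add_zero]
  simp [Fin.succAbove_zero]

/-- Column-0 size reduction for a lower-triangular matrix with positive diagonal whose
other columns are already size-reduced. -/
lemma reduce_col {m : ℕ} (H : Matrix (Fin (m+1)) (Fin (m+1)) ℤ)
    (htri : ∀ i j : Fin (m+1), i < j → H i j = 0) (hd : ∀ i, 0 < H i i)
    (hc : ∀ i j : Fin (m+1), j ≠ 0 → |H i j| ≤ H i i) :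
    ∃ V : Matrix (Fin (m+1)) (Fin (m+1)) ℤ, IsUnit V.det ∧
      (∀ i j : Fin (m+1), i < j → (H * V) i j = 0) ∧ (∀ i, 0 < (H * V) i i) ∧
      (∀ i j : Fin (m+1), |(H * V) i j| ≤ (H * V) i i) := by
  have key : ∀ r : ℕ, ∃ V : Matrix (Fin (m+1)) (Fin (m+1)) ℤ, IsUnit V.det ∧
      (∀ i j : Fin (m+1), j ≠ 0 → (H * V) i j = H i j) ∧ ((H * V) 0 0 = H 0 0) ∧
      (∀ i : Fin (m+1), (i : ℕ) < r → |(H * V) i 0| ≤ H i i) := by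
    intro r
    induction r with
    | zero => exact ⟨1, by simp, by simp, by simp, fun i h => absurd h (by omega)⟩
    | succ r ih =>
      obtain ⟨V, hV, hcols, h00, hlt⟩ := ih
      by_cases hr : r < m + 1 ∧ r ≠ 0
      · set ir : Fin (m+1) := ⟨r, hr.1⟩ with hir
        have hir0 : ir ≠ 0 := by
          simp only [hir, Ne, Fin.ext_iff, Fin.val_zero]
          exact hr.2
        set a := (H * V) ir 0 with ha
        set d := H ir ir with hdd
        have hd' : 0 < d := hd ir
        set T : Matrix (Fin (m+1)) (Fin (m+1)) ℤ := transvection ir 0 (-(a/d)) with hT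
        have hTcols : ∀ (x k : Fin (m+1)), k ≠ 0 → ((H * V) * T) x k = (H * V) x k :=
          fun x k hk => Matrix.mul_transvection_apply_of_ne _ _ _ _ hk _ _
        have hTc0 : ∀ x : Fin (m+1), ((H * V) * T) x 0 = (H * V) x 0 + (-(a/d)) * (H * V) x ir :=
          fun x => Matrix.mul_transvection_apply_same _ _ _ _ _
        refine ⟨V * T, ?_, ?_, ?_, ?_⟩
        · rw [Matrix.det_mul, hT, Matrix.det_transvection_of_ne _ _ hir0 _, mul_one]
          exact hV
        · intro i j hj
          rw [← Matrix.mul_assoc, hTcols i j hj]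
          exact hcols i j hj
        · rw [← Matrix.mul_assoc, hTc0 0, hcols 0 ir hir0,
            htri 0 ir (by rw [Fin.lt_def, Fin.val_zero]; exact Nat.pos_of_ne_zero hr.2),
            mul_zero, add_zero, h00]
        · intro i hi
          rw [← Matrix.mul_assoc, hTc0 i]
          by_cases hic : (i : ℕ) < r
          · rw [hcols i ir hir0, htri i ir (by rw [Fin.lt_def]; exact hic), mul_zero, add_zero]
            exact hlt i hic
          · have hieq : i = ir := by
              apply Fin.ext
              simp only [hir]
              omega
            rw [hieq, hcols ir ir hir0, ← hdd, ← ha]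
            have he : a + -(a / d) * d = a % d := by rw [Int.emod_def]; ring
            rw [he, abs_of_nonneg (Int.emod_nonneg a (ne_of_gt hd'))]
            exact le_of_lt (Int.emod_lt_of_pos a hd')
      · refine ⟨V, hV, hcols, h00, fun i hi => ?_⟩
        by_cases hic : (i : ℕ) < r
        · exact hlt i hic
        · have hi0 : (i : ℕ) = 0 := by
            rcases Nat.lt_or_ge r (m+1) with h | h
            · have : r = 0 := by tauto
              omega
            · omega
          have : i = 0 := by rw [Fin.ext_iff, Fin.val_zero]; omega
          subst this
          rw [h00, abs_of_pos (hd 0)]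
  obtain ⟨V, hV, hcols, h00, hlt⟩ := key (m+1)
  have hdiag : ∀ i : Fin (m+1), (H * V) i i = H i i := by
    intro i
    by_cases hi : i = 0
    · rw [hi]; exact h00
    · exact hcols i i hi
  refine ⟨V, hV, ?_, ?_, ?_⟩
  · intro i j hij
    have hj : j ≠ 0 := by
      intro h; rw [h] at hij; exact absurd hij (by simp [Fin.lt_def])
    rw [hcols i j hj]
    exact htri i j hij
  · intro i; rw [hdiag i]; exact hd i
  · intro i j
    by_cases hj : j = 0
    · rw [hj, hdiag i]
      exact hlt i i.isLt
    · rw [hcols i j hj, hdiag i]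
      exact hc i j hj

/-- Hermite normal form (column style): any square integer matrix with nonzero determinant
can be brought, by right multiplication with a unimodular matrix, to lower-triangular form
with positive diagonal and all entries bounded by the diagonal entry of their row. -/
lemma hermite_form : ∀ (n : ℕ) (A : Matrix (Fin n) (Fin n) ℤ), A.det ≠ 0 →
    ∃ U : Matrix (Fin n) (Fin n) ℤ, IsUnit U.det ∧
      (∀ i j : Fin n, i < j → (A * U) i j = 0) ∧ (∀ i, 0 < (A * U) i i) ∧
      (∀ i j : Fin n, |(A * U) i j| ≤ (A * U) i i) := by
  intro n
  induction n with
  | zero =>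
    intro A _
    exact ⟨1, by simp, fun i => i.elim0, fun i => i.elim0, fun i => i.elim0⟩
  | succ n ih =>
    intro A hA
    have hrow : ∃ j, A 0 j ≠ 0 := by
      by_contra h
      push_neg at h
      exact hA (Matrix.det_eq_zero_of_row_eq_zero 0 h)
    obtain ⟨U₀, hU₀, hg, hrow0⟩ := row_clear A hrow
    set B := A * U₀ with hB
    set C := B.submatrix Fin.succ Fin.succ with hCdef
    have hdetB : B.det = B 0 0 * C.det := det_firstrow B hrow0
    have hBdet_ne : B.det ≠ 0 := by
      rw [hB, Matrix.det_mul]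
      exact mul_ne_zero hA hU₀.ne_zero
    have hCdet : C.det ≠ 0 := fun h => hBdet_ne (by rw [hdetB, h, mul_zero])
    obtain ⟨U', hU', htri', hd', hb'⟩ := ih C hCdet
    set U₂ : Matrix (Fin (n+1)) (Fin (n+1)) ℤ := Matrix.of (fun i j =>
      if hi : i = 0 then (if j = 0 then 1 else 0)
      else if hj : j = 0 then 0 else U' (i.pred hi) (j.pred hj)) with hU₂def
    have hU₂row0 : ∀ j : Fin (n+1), j ≠ 0 → U₂ 0 j = 0 := by
      intro j hj
      simp [hU₂def, hj]
    have hU₂00 : U₂ 0 0 = 1 := by simp [hU₂def]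
    have hU₂col0 : ∀ i : Fin (n+1), i ≠ 0 → U₂ i 0 = 0 := by
      intro i hi
      simp [hU₂def, hi]
    have hU₂sub : ∀ (a b : Fin n), U₂ a.succ b.succ = U' a b := by
      intro a b
      simp [hU₂def, Fin.succ_ne_zero]
    have hU₂det : IsUnit U₂.det := by
      have : U₂.det = U₂ 0 0 * (U₂.submatrix Fin.succ Fin.succ).det :=
        det_firstrow U₂ hU₂row0
      rw [this, hU₂00, one_mul]
      have : U₂.submatrix Fin.succ Fin.succ = U' := by
        ext a b
        exact hU₂sub a b
      rw [this]
      exact hU'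
    -- entries of B * U₂
    have e2 : ∀ i : Fin (n+1), (B * U₂) i 0 = B i 0 := by
      intro i
      rw [Matrix.mul_apply]
      rw [Finset.sum_eq_single 0]
      · rw [hU₂00, mul_one]
      · intro k _ hk
        rw [hU₂col0 k hk, mul_zero]
      · intro h
        exact absurd (Finset.mem_univ 0) h
    have e1 : ∀ j : Fin (n+1), j ≠ 0 → (B * U₂) 0 j = 0 := by
      intro j hj
      rw [Matrix.mul_apply]
      apply Finset.sum_eq_zero
      intro k _
      by_cases hk : k = 0
      · rw [hk, hU₂row0 j hj, mul_zero]
      · rw [hrow0 k hk, zero_mul]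
    have e4 : ∀ (i j : Fin (n+1)) (hi : i ≠ 0) (hj : j ≠ 0),
        (B * U₂) i j = (C * U') (i.pred hi) (j.pred hj) := by
      intro i j hi hj
      rw [Matrix.mul_apply, Matrix.mul_apply, Fin.sum_univ_succ, hU₂row0 j hj, mul_zero,
        zero_add]
      apply Finset.sum_congr rfl
      intro k _
      have h1 : U₂ k.succ j = U' k (j.pred hj) := by
        conv_lhs => rw [← Fin.succ_pred j hj]
        exact hU₂sub k (j.pred hj)
      have h2 : B i k.succ = C (i.pred hi) k := by
        rw [hCdef, Matrix.submatrix_apply, Fin.succ_pred]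
      rw [h1, h2]
    obtain ⟨V, hVdet, hVtri, hVd, hVb⟩ := reduce_col (B * U₂)
      (by
        intro i j hij
        have hj : j ≠ 0 := by
          intro h; rw [h] at hij; exact absurd hij (by simp [Fin.lt_def])
        by_cases hi : i = 0
        · rw [hi]; exact e1 j hj
        · rw [e4 i j hi hj]
          apply htri'
          rw [Fin.lt_def, Fin.coe_pred, Fin.coe_pred]
          have := Fin.lt_def.mp hij
          have hi' : (i : ℕ) ≠ 0 := fun h => hi (by rw [Fin.ext_iff, Fin.val_zero]; omega)
          omega)
      (by
        intro i
        by_cases hi : i = 0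
        · rw [hi, e2 0]; exact hg
        · rw [e4 i i hi hi]; exact hd' _)
      (by
        intro i j hj
        by_cases hi : i = 0
        · rw [hi, e1 j hj, e2 0, abs_zero]
          exact le_of_lt hg
        · rw [e4 i j hi hj, e4 i i hi hi]
          exact hb' _ _)
    have hAU : A * (U₀ * (U₂ * V)) = (B * U₂) * V := by
      rw [hB]
      simp only [Matrix.mul_assoc]
    refine ⟨U₀ * (U₂ * V), ?_, ?_, ?_, ?_⟩
    · rw [Matrix.det_mul, Matrix.det_mul]
      exact hU₀.mul (hU₂det.mul hVdet)
    · intro i j hij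
      rw [hAU]
      exact hVtri i j hij
    · intro i
      rw [hAU]
      exact hVd i
    · intro i j
      rw [hAU]
      exact hVb i j

theorem exists_unimodular_with_small_entries (n : ℕ) (hn : 1 ≤ n)
    (A : Matrix (Fin n) (Fin n) ℤ) (hD : 0 < A.det) :
    ∃ U : Matrix (Fin n) (Fin n) ℤ, IsUnit U.det ∧
      ∀ i j : Fin n, |(A * U) i j| ≤ A.det := by
  obtain ⟨U, hU, htri, hd, hb⟩ := hermite_form n A (ne_of_gt hD)
  refine ⟨U, hU, fun i j => ?_⟩
  have hblock : (A * U).BlockTriangular OrderDual.toDual := fun x y hxy => htri x y hxy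
  have hdet : (A * U).det = ∏ i, (A * U) i i := Matrix.det_of_lowerTriangular _ hblock
  have hprodpos : 0 < ∏ i, (A * U) i i := Finset.prod_pos (fun i _ => hd i)
  have hU1 : (A * U).det = A.det := by
    rcases Int.isUnit_iff.mp hU with h | h
    · rw [Matrix.det_mul, h, mul_one]
    · exfalso
      rw [Matrix.det_mul, h] at hdet
      linarith
  calc |(A * U) i j| ≤ (A * U) i i := hb i j
    _ ≤ ∏ k, (A * U) k k :=
        Int.le_of_dvd hprodpos (Finset.dvd_prod_of_mem _ (Finset.mem_univ i))
    _ = A.det := by rw [← hdet]; exact hU1
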